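/- Let G be a König-Egerváry graph with vertex set V, and suppose there exists a maximum stable set S of G such that the set of edges with one endpoint in S and the other in V − S spans a forest (contains no cycle). Then ξ(G) + η(G) = α(G), σ(G) + η(G) = μ(G), and ξ(G) + 2η(G) + σ(G) = |V(G)|. -/

import Mathlib

open scoped Classical

namespace KEG

variable {V : Type*}

/-- `S` is a stable (independent) set of vertices of `G`. -/
def IsStable (G : SimpleGraph V) (S : Finset V) : Prop :=
  ∀ ⦃x⦄, x ∈ S → ∀ ⦃y⦄, y ∈ S → ¬G.Adj x y

/-- The stability number `α(G)`: maximum cardinality of a stable set. -/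
noncomputable def alphaNum (G : SimpleGraph V) : ℕ :=
  sSup {n | ∃ S : Finset V, IsStable G S ∧ S.card = n}

/-- `S` is a maximum stable set of `G`. -/
def IsMaxStable (G : SimpleGraph V) (S : Finset V) : Prop :=
  IsStable G S ∧ S.card = alphaNum G

/-- `M` is a matching of `G`: a set of edges of `G`, pairwise non-incident. -/
def IsMatching (G : SimpleGraph V) (M : Finset (Sym2 V)) : Prop :=
  (∀ e ∈ M, e ∈ G.edgeSet) ∧
    ∀ e ∈ M, ∀ f ∈ M, e ≠ f → ∀ v : V, v ∈ e → v ∉ f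

/-- The matching number `μ(G)`: maximum cardinality of a matching. -/
noncomputable def muNum (G : SimpleGraph V) : ℕ :=
  sSup {n | ∃ M : Finset (Sym2 V), IsMatching G M ∧ M.card = n}

/-- A perfect matching: a matching covering every vertex. -/
def IsPerfectMatching (G : SimpleGraph V) (M : Finset (Sym2 V)) : Prop :=
  IsMatching G M ∧ ∀ v : V, ∃ e ∈ M, v ∈ e

/-- A maximal matching: a matching such that no edge of `G` can be added to it
while keeping pairwise non-incidence, i.e. every edge of `G` outside `M` is
incident to an edge of `M`. -/
def IsMaximalMatching (G : SimpleGraph V) (M : Finset (Sym2 V)) : Prop :=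
  IsMatching G M ∧ ∀ e ∈ G.edgeSet, e ∉ M → ∃ f ∈ M, ∃ v : V, v ∈ e ∧ v ∈ f

/-- `G` is a König-Egerváry graph: `α(G) + μ(G) = |V(G)|`. -/
def KonigEgervary (G : SimpleGraph V) [Fintype V] : Prop :=
  alphaNum G + muNum G = Fintype.card V

/-- `e` is an α-critical edge of `G`: `α(G - e) > α(G)`. -/
def IsAlphaCritical (G : SimpleGraph V) (e : Sym2 V) : Prop :=
  e ∈ G.edgeSet ∧ alphaNum G < alphaNum (G.deleteEdges {e})

/-- `e` is a μ-critical edge of `G`: `μ(G - e) < μ(G)`. -/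
def IsMuCritical (G : SimpleGraph V) (e : Sym2 V) : Prop :=
  e ∈ G.edgeSet ∧ muNum (G.deleteEdges {e}) < muNum G

/-- `core(G)`: the set of vertices belonging to every maximum stable set of `G`. -/
def core (G : SimpleGraph V) : Set V :=
  {v | ∀ S : Finset V, IsMaxStable G S → v ∈ S}

/-- `ξ(G) = |core(G)|`. -/
noncomputable def xi (G : SimpleGraph V) : ℕ := (core G).ncard

/-- `σ(G)`: the number of vertices belonging to no maximum stable set of `G`. -/
noncomputable def sigmaNum (G : SimpleGraph V) : ℕ :=
  {v : V | ∀ S : Finset V, IsMaxStable G S → v ∉ S}.ncard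

/-- `η(G)`: the number of α-critical edges of `G`. -/
noncomputable def eta (G : SimpleGraph V) : ℕ :=
  {e : Sym2 V | IsAlphaCritical G e}.ncard

/-- `N(A)`: the set of vertices adjacent to some vertex of `A`. -/
def nbhd (G : SimpleGraph V) (A : Set V) : Set V :=
  {v | ∃ a ∈ A, G.Adj a v}

/-- `N[A] = A ∪ N(A)`: the closed neighborhood of `A`. -/
def closedNbhd (G : SimpleGraph V) (A : Set V) : Set V :=
  A ∪ nbhd G A


lemma isStable_card_le_alpha [Fintype V] {G : SimpleGraph V} {A : Finset V}
    (h : IsStable G A) : A.card ≤ alphaNum G :=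
  le_csSup ⟨Fintype.card V, by rintro n ⟨B, _, rfl⟩; simpa using Finset.card_le_univ B⟩
    ⟨A, h, rfl⟩

lemma exists_maxStable [Fintype V] (G : SimpleGraph V) :
    ∃ A : Finset V, IsMaxStable G A := by
  have h : alphaNum G ∈ {n | ∃ S : Finset V, IsStable G S ∧ S.card = n} :=
    Nat.sSup_mem ⟨0, ∅, fun x hx => by simp at hx, by simp⟩
      ⟨Fintype.card V, by rintro n ⟨B, _, rfl⟩; simpa using Finset.card_le_univ B⟩
  obtain ⟨A, hA, hc⟩ := h
  exact ⟨A, hA, hc⟩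

lemma exists_maxMatching [Fintype V] (G : SimpleGraph V) :
    ∃ M : Finset (Sym2 V), IsMatching G M ∧ M.card = muNum G := by
  have h : muNum G ∈ {n | ∃ M : Finset (Sym2 V), IsMatching G M ∧ M.card = n} :=
    Nat.sSup_mem ⟨0, ∅, ⟨fun e he => by simp at he, fun e he => by simp at he⟩, by simp⟩
      ⟨Fintype.card (Sym2 V), by rintro n ⟨N, _, rfl⟩; simpa using Finset.card_le_univ N⟩
  obtain ⟨M, hM, hc⟩ := h
  exact ⟨M, hM, hc⟩

lemma crit_endpoints [Fintype V] {G : SimpleGraph V} {u v : V}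
    (hc : IsAlphaCritical G s(u, v)) :
    ∃ A : Finset V, IsStable (G.deleteEdges {s(u, v)}) A ∧ A.card = alphaNum G + 1 ∧
      u ∈ A ∧ v ∈ A ∧ IsMaxStable G (A.erase u) ∧ IsMaxStable G (A.erase v) := by
  classical
  obtain ⟨A, hAst, hAcard⟩ := exists_maxStable (G.deleteEdges {s(u, v)})
  have huv : u ≠ v := (G.mem_edgeSet.1 hc.1).ne
  have hcard_gt : alphaNum G < A.card := by rw [hAcard]; exact hc.2
  have hstG : ∀ B : Finset V, B ⊆ A → (u ∉ B ∨ v ∉ B) → IsStable G B := by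
    intro B hB hnot x hx y hy hadj
    by_cases he : s(x, y) = s(u, v)
    · rcases Sym2.eq_iff.1 he with ⟨rfl, rfl⟩ | ⟨rfl, rfl⟩
      · rcases hnot with h | h
        · exact h hx
        · exact h hy
      · rcases hnot with h | h
        · exact h hy
        · exact h hx
    · exact hAst (hB hx) (hB hy) (by simp [he, hadj])
  have huA : u ∈ A := by
    by_contra huA
    exact absurd (isStable_card_le_alpha (hstG A Finset.Subset.rfl (Or.inl huA)))
      (by omega)
  have hvA : v ∈ A := by
    by_contra hvA
    exact absurd (isStable_card_le_alpha (hstG A Finset.Subset.rfl (Or.inr hvA)))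
      (by omega)
  have heu : IsStable G (A.erase u) :=
    hstG _ (Finset.erase_subset _ _) (Or.inl (Finset.notMem_erase _ _))
  have hev : IsStable G (A.erase v) :=
    hstG _ (Finset.erase_subset _ _) (Or.inr (Finset.notMem_erase _ _))
  have hcu := Finset.card_erase_of_mem huA
  have hcv := Finset.card_erase_of_mem hvA
  have h1 := isStable_card_le_alpha heu
  have h2 := isStable_card_le_alpha hev
  have hAc : A.card = alphaNum G + 1 := by omega
  exact ⟨A, hAst, hAc, huA, hvA, ⟨heu, by omega⟩, ⟨hev, by omega⟩⟩

lemma crit_of_forest [Fintype V] {G : SimpleGraph V} {S S' : Finset V}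
    (hS : IsStable G S) (hS' : IsStable G S')
    {M : Finset (Sym2 V)} (hM : IsMatching G M)
    (hforest : (SimpleGraph.fromRel fun x y => G.Adj x y ∧ x ∈ S ∧ y ∉ S).IsAcyclic)
    (pa : V → V)
    (hpa : ∀ v, v ∉ S → pa v ∈ S ∧ s(pa v, v) ∈ M)
    (painj : ∀ t1, t1 ∉ S → ∀ t2, t2 ∉ S → pa t1 = pa t2 → t1 = t2)
    (hpasurj : ∀ x, x ∈ S → x ∉ S' → ∃ y, y ∈ S' ∧ y ∉ S ∧ pa y = x)
    {t : V} (htS : t ∉ S) (htS' : t ∈ S') :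
    ∃ A : Finset V, IsStable (G.deleteEdges {s(pa t, t)}) A ∧ A.card = S.card + 1 := by
  classical
  have edge_unique : ∀ e ∈ M, ∀ f ∈ M, ∀ v : V, v ∈ e → v ∈ f → e = f := by
    intro e he f hf v hv hvf
    by_contra hne
    exact hM.2 e he f hf hne v hv hvf
  set s : V := pa t with hsdef
  have hsS : s ∈ S := (hpa t htS).1
  have heM : s(s, t) ∈ M := (hpa t htS).2
  have hadj_st : G.Adj s t := G.mem_edgeSet.1 (hM.1 _ heM)
  have hsS' : s ∉ S' := fun h => hS' h htS' hadj_st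
  -- the bipartite difference graph H
  let H : SimpleGraph V :=
    { Adj := fun x y => G.Adj x y ∧
        ((x ∈ S ∧ x ∉ S' ∧ y ∈ S' ∧ y ∉ S) ∨ (y ∈ S ∧ y ∉ S' ∧ x ∈ S' ∧ x ∉ S))
      symm := by
        constructor
        intro x y h
        exact ⟨h.1.symm, h.2.elim Or.inr Or.inl⟩
      loopless := ⟨fun x h => G.loopless.irrefl x h.1⟩ }
  have hHle : H ≤ SimpleGraph.fromRel fun x y => G.Adj x y ∧ x ∈ S ∧ y ∉ S := by
    intro x y h
    refine ⟨h.1.ne, ?_⟩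
    rcases h.2 with ⟨h1, _, _, h4⟩ | ⟨h1, _, _, h4⟩
    · exact Or.inl ⟨h.1, h1, h4⟩
    · exact Or.inr ⟨h.1.symm, h1, h4⟩
  have hHac : H.IsAcyclic := fun _ c hc =>
    hforest (c.mapLe hHle) ((SimpleGraph.Walk.mapLe_isCycle hHle).2 hc)
  have hHadj_st : H.Adj s t := ⟨hadj_st, Or.inl ⟨hsS, hsS', htS', htS⟩⟩
  have hbridge : ¬(H.deleteEdges {s(s, t)}).Reachable s t :=
    (SimpleGraph.isBridge_iff.1
      (SimpleGraph.isAcyclic_iff_forall_adj_isBridge.1 hHac hHadj_st))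
  set H' : SimpleGraph V := H.deleteEdges {s(s, t)} with hH'def
  set B : Set V := {v | H'.Reachable t v} with hBdef
  have htB : t ∈ B := SimpleGraph.Reachable.refl t
  have hsB : s ∉ B := fun h => hbridge h.symm
  have hH'adj : ∀ x y : V, H.Adj x y → s(x, y) ≠ s(s, t) → H'.Adj x y := by
    intro x y h hne
    rw [hH'def, SimpleGraph.deleteEdges_adj]
    exact ⟨h, by simpa using hne⟩
  have hBD : ∀ v ∈ B, (v ∈ S' ∧ v ∉ S) ∨ (v ∈ S ∧ v ∉ S') := by
    intro v hv
    have hwalk : ∀ (x y : V) (w : H'.Walk x y), y = x ∨ ∃ u, H'.Adj u y := by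
      intro x y w
      induction w with
      | nil => exact Or.inl rfl
      | @cons a b c h p ih =>
        rcases ih with rfl | hu
        · exact Or.inr ⟨a, h⟩
        · exact Or.inr hu
    obtain ⟨w⟩ := hv
    rcases hwalk t v w with rfl | ⟨u, hu⟩
    · exact Or.inl ⟨htS', htS⟩
    · have hH : H.Adj u v := (SimpleGraph.deleteEdges_adj.mp hu).1
      rcases hH.2 with ⟨_, _, h3, h4⟩ | ⟨h1, h2, _, _⟩
      · exact Or.inl ⟨h3, h4⟩
      · exact Or.inr ⟨h1, h2⟩
  have hbd : ∀ x y : V, H.Adj x y → x ∈ B → y ∉ B → x = t ∧ y = s := by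
    intro x y hxy hx hy
    by_cases he : s(x, y) = s(s, t)
    · rcases Sym2.eq_iff.1 he with ⟨rfl, rfl⟩ | ⟨rfl, rfl⟩
      · exact absurd hx hsB
      · exact ⟨rfl, rfl⟩
    · exact absurd (hx.trans (hH'adj x y hxy he).reachable) hy
  -- counting
  set BS : Finset V := (S \ S').filter (fun v => v ∈ B) with hBSdef
  set BT : Finset V := (S' \ S).filter (fun v => v ∈ B) with hBTdef
  have htBT : t ∈ BT := by
    rw [hBTdef, Finset.mem_filter, Finset.mem_sdiff]
    exact ⟨⟨htS', htS⟩, htB⟩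
  -- the inverse function
  set inv : V → V := fun x => if h : ∃ y, y ∈ S' ∧ y ∉ S ∧ pa y = x then h.choose else x
    with hinvdef
  have inv_spec : ∀ x, x ∈ S → x ∉ S' → inv x ∈ S' ∧ inv x ∉ S ∧ pa (inv x) = x := by
    intro x hx hx'
    have h : ∃ y, y ∈ S' ∧ y ∉ S ∧ pa y = x := hpasurj x hx hx'
    rw [hinvdef]
    simp only [dif_pos h]
    exact h.choose_spec
  -- matching edges give H' adjacency inside B
  have hmB : ∀ y, y ∈ S' → y ∉ S → y ≠ t → (pa y ∈ B ↔ y ∈ B) := by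
    intro y hy1 hy2 hyt
    have hyM := (hpa y hy2).2
    have hadj : G.Adj (pa y) y := G.mem_edgeSet.1 (hM.1 _ hyM)
    have hpaS : pa y ∈ S := (hpa y hy2).1
    have hpaS' : pa y ∉ S' := fun h => hS' h hy1 hadj
    have hHadj : H.Adj (pa y) y := ⟨hadj, Or.inl ⟨hpaS, hpaS', hy1, hy2⟩⟩
    have hne : s(pa y, y) ≠ s(s, t) := by
      intro h
      rcases Sym2.eq_iff.1 h with ⟨h1, h2⟩ | ⟨h1, h2⟩
      · exact hyt h2
      · exact htS (h1 ▸ hpaS)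
    have h' : H'.Adj (pa y) y := hH'adj _ _ hHadj hne
    exact ⟨fun h => h.trans h'.reachable, fun h => h.trans h'.symm.reachable⟩
  have hcard_bij : BS.card = (BT.erase t).card := by
    apply Finset.card_bij' (fun a _ => inv a) (fun b _ => pa b)
    · -- hi : maps BS into BT.erase t
      intro a ha
      rw [hBSdef, Finset.mem_filter, Finset.mem_sdiff] at ha
      obtain ⟨⟨haS, haS'⟩, haB⟩ := ha
      obtain ⟨h1, h2, h3⟩ := inv_spec a haS haS'
      have hat : inv a ≠ t := by
        intro h
        rw [h] at h3
        rw [hsdef, h3] at hsB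
        exact hsB haB
      rw [Finset.mem_erase, hBTdef, Finset.mem_filter, Finset.mem_sdiff]
      refine ⟨hat, ⟨h1, h2⟩, ?_⟩
      exact (hmB (inv a) h1 h2 hat).1 (h3.symm ▸ haB)
    · -- hj : maps BT.erase t into BS
      intro b hb
      rw [Finset.mem_erase, hBTdef, Finset.mem_filter, Finset.mem_sdiff] at hb
      obtain ⟨hbt, ⟨hb1, hb2⟩, hbB⟩ := hb
      have hpaS : pa b ∈ S := (hpa b hb2).1
      have hadj : G.Adj (pa b) b := G.mem_edgeSet.1 (hM.1 _ (hpa b hb2).2)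
      have hpaS' : pa b ∉ S' := fun h => hS' h hb1 hadj
      rw [hBSdef, Finset.mem_filter, Finset.mem_sdiff]
      exact ⟨⟨hpaS, hpaS'⟩, (hmB b hb1 hb2 hbt).2 hbB⟩
    · intro a ha
      rw [hBSdef, Finset.mem_filter, Finset.mem_sdiff] at ha
      exact (inv_spec a ha.1.1 ha.1.2).2.2
    · intro b hb
      rw [Finset.mem_erase, hBTdef, Finset.mem_filter, Finset.mem_sdiff] at hb
      obtain ⟨hbt, ⟨hb1, hb2⟩, hbB⟩ := hb
      have hpaS : pa b ∈ S := (hpa b hb2).1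
      have hadj : G.Adj (pa b) b := G.mem_edgeSet.1 (hM.1 _ (hpa b hb2).2)
      have hpaS' : pa b ∉ S' := fun h => hS' h hb1 hadj
      obtain ⟨h1, h2, h3⟩ := inv_spec (pa b) hpaS hpaS'
      exact painj _ h2 _ hb2 h3
  have hBTcard : BT.card = BS.card + 1 := by
    have h1 := Finset.card_erase_of_mem htBT
    have h2 : 1 ≤ BT.card := Finset.card_pos.2 ⟨t, htBT⟩
    omega
  -- the stable set A
  set A : Finset V := (S'.filter (fun v => v ∈ B)) ∪ (S.filter (fun v => v ∉ B)) with hAdef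
  have hfS' : S'.filter (fun v => v ∈ B) = BT := by
    rw [hBTdef]
    ext v
    simp only [Finset.mem_filter, Finset.mem_sdiff]
    constructor
    · rintro ⟨h1, h2⟩
      rcases hBD v h2 with ⟨_, h⟩ | ⟨_, h⟩
      · exact ⟨⟨h1, h⟩, h2⟩
      · exact absurd h1 h
    · rintro ⟨⟨h1, _⟩, h2⟩
      exact ⟨h1, h2⟩
  have hfS : S.filter (fun v => v ∈ B) = BS := by
    rw [hBSdef]
    ext v
    simp only [Finset.mem_filter, Finset.mem_sdiff]
    constructor
    · rintro ⟨h1, h2⟩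
      rcases hBD v h2 with ⟨_, h⟩ | ⟨_, h⟩
      · exact absurd h1 h
      · exact ⟨⟨h1, h⟩, h2⟩
    · rintro ⟨⟨h1, _⟩, h2⟩
      exact ⟨h1, h2⟩
  have hdisj : Disjoint (S'.filter (fun v => v ∈ B)) (S.filter (fun v => v ∉ B)) := by
    rw [Finset.disjoint_left]
    intro v hv hv'
    rw [Finset.mem_filter] at hv hv'
    exact hv'.2 hv.2
  have hAcard : A.card = S.card + 1 := by
    rw [hAdef, Finset.card_union_of_disjoint hdisj, hfS']
    have := Finset.card_filter_add_card_filter_not (s := S) (p := fun v => v ∈ B)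
    rw [hfS] at this
    omega
  refine ⟨A, ?_, hAcard⟩
  intro x hx y hy hadj
  rw [SimpleGraph.deleteEdges_adj] at hadj
  have hGxy : G.Adj x y := hadj.1
  have hne : s(x, y) ≠ s(s, t) := by simpa using hadj.2
  rw [hAdef, Finset.mem_union, Finset.mem_filter, Finset.mem_filter] at hx hy
  rcases hx with ⟨hx1, hx2⟩ | ⟨hx1, hx2⟩ <;> rcases hy with ⟨hy1, hy2⟩ | ⟨hy1, hy2⟩
  · exact hS' hx1 hy1 hGxy
  · -- x ∈ S' ∩ B, y ∈ S \ B
    have hxS : x ∉ S := by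
      intro h
      exact hS h hy1 hGxy
    have hyS' : y ∉ S' := by
      intro h
      exact hS' hx1 h hGxy
    have hH : H.Adj x y := ⟨hGxy, Or.inr ⟨hy1, hyS', hx1, hxS⟩⟩
    obtain ⟨rfl, rfl⟩ := hbd x y hH hx2 hy2
    exact hne (Sym2.eq_swap)
  · -- x ∈ S \ B, y ∈ S' ∩ B
    have hyS : y ∉ S := fun h => hS hx1 h hGxy
    have hxS' : x ∉ S' := fun h => hS' h hy1 hGxy
    have hH : H.Adj y x := ⟨hGxy.symm, Or.inr ⟨hx1, hxS', hy1, hyS⟩⟩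
    obtain ⟨rfl, rfl⟩ := hbd y x hH hy2 hx2
    exact hne rfl
  · exact hS hx1 hy1 hGxy


/-- If `G` is a König-Egerváry graph having a maximum stable set `S` such that
the set of edges between `S` and `V - S` spans a forest, then
`ξ + η = α`, `σ + η = μ`, and `ξ + 2η + σ = |V(G)|`. -/
theorem stmt_18 {V : Type*} [Fintype V] (G : SimpleGraph V)
    (hG : KonigEgervary G) (S : Finset V) (hS : IsMaxStable G S)
    (hforest : (SimpleGraph.fromRel
        fun x y => G.Adj x y ∧ x ∈ S ∧ y ∉ S).IsAcyclic) :
    xi G + eta G = alphaNum G ∧ sigmaNum G + eta G = muNum G ∧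
      xi G + 2 * eta G + sigmaNum G = Fintype.card V := by
  classical
  obtain ⟨M, hM, hMcard⟩ := exists_maxMatching G
  have hedge := hM.1
  have edge_unique : ∀ e ∈ M, ∀ f ∈ M, ∀ v : V, v ∈ e → v ∈ f → e = f := by
    intro e he f hf v hv hvf
    by_contra hne
    exact hM.2 e he f hf hne v hv hvf
  have hKE : alphaNum G + muNum G = Fintype.card V := hG
  have hSc : S.card = alphaNum G := hS.2
  have hcompl : (Sᶜ : Finset V).card = muNum G := by
    have h1 : (Sᶜ : Finset V).card = Fintype.card V - S.card := by
      simp [Finset.card_compl]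
    have h2 : S.card ≤ Fintype.card V := by simpa using Finset.card_le_univ S
    omega
  -- choose the non-S endpoint of each matching edge
  have hchoice : ∀ e : Sym2 V, ∃ w, e ∈ M → (w ∈ e ∧ w ∉ S) := by
    intro e
    induction e using Sym2.inductionOn with
    | _ x y =>
      by_cases he : s(x, y) ∈ M
      · have hadj : G.Adj x y := G.mem_edgeSet.1 (hedge _ he)
        by_cases hx : x ∈ S
        · by_cases hy : y ∈ S
          · exact absurd hadj (hS.1 hx hy)
          · exact ⟨y, fun _ => ⟨by simp, hy⟩⟩
        · exact ⟨x, fun _ => ⟨by simp, hx⟩⟩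
      · exact ⟨x, fun h => absurd h he⟩
  choose tE htE using hchoice
  have htEinj : Set.InjOn tE ↑M := by
    intro e he f hf h
    have he' : e ∈ M := by simpa using he
    have hf' : f ∈ M := by simpa using hf
    exact edge_unique e he' f hf' (tE e) (htE e he').1 (h.symm ▸ (htE f hf').1)
  have himg : M.image tE = Sᶜ := by
    apply Finset.eq_of_subset_of_card_le
    · intro v hv
      obtain ⟨e, he, rfl⟩ := Finset.mem_image.1 hv
      simpa using (htE e he).2
    · rw [Finset.card_image_of_injOn htEinj, hcompl, hMcard]
  have hsat : ∀ v : V, v ∉ S → ∃ e ∈ M, tE e = v := by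
    intro v hv
    have hmem : v ∈ M.image tE := by
      rw [himg]; simpa using hv
    simpa using Finset.mem_image.1 hmem
  have hother : ∀ e ∈ M, ∀ w, w ∈ e → w ≠ tE e → w ∈ S := by
    intro e he w hw hne
    by_contra hwS
    obtain ⟨f, hf, hfe⟩ := hsat w hwS
    have hef : e = f := edge_unique e he f hf w hw (hfe ▸ (htE f hf).1)
    exact hne (by rw [hef]; exact hfe.symm)
  -- the partner function
  have hpaex : ∀ v : V, ∃ x, v ∉ S → (x ∈ S ∧ s(x, v) ∈ M) := by
    intro v
    by_cases hv : v ∈ S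
    · exact ⟨v, fun h => absurd hv h⟩
    · obtain ⟨e, he, hte⟩ := hsat v hv
      revert he hte
      induction e using Sym2.inductionOn with
      | _ x y =>
        intro he hte
        have hadj : G.Adj x y := G.mem_edgeSet.1 (hedge _ he)
        have hvm : v ∈ s(x, y) := hte ▸ (htE _ he).1
        rcases Sym2.mem_iff.1 hvm with rfl | rfl
        · have hyS : y ∈ S := hother _ he y (by simp) (by rw [hte]; exact hadj.ne.symm)
          exact ⟨y, fun _ => ⟨hyS, by rw [Sym2.eq_swap]; exact he⟩⟩
        · have hxS : x ∈ S := hother _ he x (by simp) (by rw [hte]; exact hadj.ne)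
          exact ⟨x, fun _ => ⟨hxS, he⟩⟩
  choose pa hpa using hpaex
  have painj : ∀ t1, t1 ∉ S → ∀ t2, t2 ∉ S → pa t1 = pa t2 → t1 = t2 := by
    intro t1 h1 t2 h2 heq
    have e1 := (hpa t1 h1).2
    have e2 := (hpa t2 h2).2
    have hmem : pa t1 ∈ s(pa t2, t2) := by rw [heq]; simp
    have heqe := edge_unique _ e1 _ e2 (pa t1) (by simp) hmem
    rcases Sym2.eq_iff.1 heqe with ⟨-, h⟩ | ⟨hA, -⟩
    · exact h
    · exact absurd (hA ▸ (hpa t1 h1).1) h2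
  have hpasurj : ∀ T : Finset V, IsStable G T → T.card = S.card →
      ∀ x, x ∈ S → x ∉ T → ∃ y, y ∈ T ∧ y ∉ S ∧ pa y = x := by
    intro T hT hTcard x hx hxT
    have hsub : (T \ S).image pa ⊆ S \ T := by
      intro z hz
      obtain ⟨y, hy, rfl⟩ := Finset.mem_image.1 hz
      rw [Finset.mem_sdiff] at hy
      have h1 : pa y ∈ S := (hpa y hy.2).1
      have hadj : G.Adj (pa y) y := G.mem_edgeSet.1 (hedge _ (hpa y hy.2).2)
      have h2 : pa y ∉ T := fun h => hT h hy.1 hadj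
      exact Finset.mem_sdiff.2 ⟨h1, h2⟩
    have hinj : Set.InjOn pa ↑(T \ S) := by
      intro a ha b hb hab
      exact painj a (Finset.mem_sdiff.1 (by simpa using ha)).2
        b (Finset.mem_sdiff.1 (by simpa using hb)).2 hab
    have hcs : (S \ T).card = (T \ S).card := Finset.card_sdiff_comm hTcard.symm
    have heqi : (T \ S).image pa = S \ T :=
      Finset.eq_of_subset_of_card_le hsub
        (by rw [Finset.card_image_of_injOn hinj, hcs])
    have hx2 : x ∈ (T \ S).image pa := heqi.symm ▸ Finset.mem_sdiff.2 ⟨hx, hxT⟩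
    obtain ⟨y, hy, hyx⟩ := Finset.mem_image.1 hx2
    rw [Finset.mem_sdiff] at hy
    exact ⟨y, hy.1, hy.2, hyx⟩
  -- every alpha-critical edge is in M
  have hcritM : ∀ e, IsAlphaCritical G e → e ∈ M := by
    intro e hc
    by_contra heM
    revert hc heM
    induction e using Sym2.inductionOn with
    | _ u v =>
      intro hc heM
      obtain ⟨A, hAst, hAcard, -, -, -, -⟩ := crit_endpoints hc
      have hch : ∀ f : Sym2 V, ∃ w, f ∈ M → (w ∈ f ∧ w ∉ A) := by
        intro f
        induction f using Sym2.inductionOn with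
        | _ x y =>
          by_cases hf : s(x, y) ∈ M
          · by_cases hx : x ∈ A
            · by_cases hy : y ∈ A
              · exfalso
                have hadj : G.Adj x y := G.mem_edgeSet.1 (hedge _ hf)
                have hnadj : ¬(G.deleteEdges {s(u, v)}).Adj x y := hAst hx hy
                rw [SimpleGraph.deleteEdges_adj] at hnadj
                push_neg at hnadj
                have hxy := hnadj hadj
                simp only [Set.mem_singleton_iff] at hxy
                exact heM (hxy ▸ hf)
              · exact ⟨y, fun _ => ⟨by simp, hy⟩⟩
            · exact ⟨x, fun _ => ⟨by simp, hx⟩⟩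
          · exact ⟨x, fun h => absurd h hf⟩
      choose d hd using hch
      have hdinj : Set.InjOn d ↑M := by
        intro e1 he1 e2 he2 h
        have he1' : e1 ∈ M := by simpa using he1
        have he2' : e2 ∈ M := by simpa using he2
        exact edge_unique e1 he1' e2 he2' (d e1) (hd e1 he1').1 (h.symm ▸ (hd e2 he2').1)
      have hsubc : M.image d ⊆ Aᶜ := by
        intro w hw
        obtain ⟨f, hf, rfl⟩ := Finset.mem_image.1 hw
        simpa using (hd f hf).2
      have hle := Finset.card_le_card hsubc
      rw [Finset.card_image_of_injOn hdinj, hMcard] at hle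
      have hAcc : (Aᶜ : Finset V).card = Fintype.card V - A.card := by
        simp [Finset.card_compl]
      have hAle : A.card ≤ Fintype.card V := by simpa using Finset.card_le_univ A
      omega
  have hrep : ∀ e ∈ M, s(pa (tE e), tE e) = e := by
    intro e he
    have h1 := htE e he
    have h2 := hpa (tE e) h1.2
    exact edge_unique _ h2.2 _ he (tE e) (by simp) h1.1
  -- the four vertex/edge classes
  set P : V → Prop := fun v => ∀ T : Finset V, IsMaxStable G T → v ∈ T with hPdef
  set Q : V → Prop := fun v => ∃ T : Finset V, IsMaxStable G T ∧ v ∈ T with hQdef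
  have hxi : xi G = (S.filter P).card := by
    have hcoreq : core G = ↑(S.filter P) := by
      ext v
      simp only [core, Set.mem_setOf_eq, Finset.coe_filter]
      exact ⟨fun h => ⟨h S hS, h⟩, fun h => h.2⟩
    rw [xi, hcoreq, Set.ncard_coe_finset]
  have hsigma : sigmaNum G = (Sᶜ.filter (fun v => ¬ Q v)).card := by
    have hseq : {v : V | ∀ T : Finset V, IsMaxStable G T → v ∉ T}
        = ↑(Sᶜ.filter (fun v => ¬ Q v)) := by
      ext v
      simp only [Set.mem_setOf_eq, Finset.coe_filter, Finset.mem_compl, hQdef]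
      constructor
      · intro h
        exact ⟨h S hS, fun ⟨T, hT, hvT⟩ => h T hT hvT⟩
      · rintro ⟨h1, h2⟩ T hT hvT
        exact h2 ⟨T, hT, hvT⟩
    rw [sigmaNum, hseq, Set.ncard_coe_finset]
  have heta : eta G = (M.filter (fun e => IsAlphaCritical G e)).card := by
    have hceq : {e : Sym2 V | IsAlphaCritical G e}
        = ↑(M.filter fun e => IsAlphaCritical G e) := by
      ext e
      simp only [Set.mem_setOf_eq, Finset.coe_filter]
      exact ⟨fun h => ⟨hcritM e h, h⟩, fun h => h.2⟩
    rw [eta, hceq, Set.ncard_coe_finset]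
  -- bijection with S-vertices outside the core
  have hbij1 : (M.filter fun e => IsAlphaCritical G e).card
      = (S.filter fun v => ¬ P v).card := by
    apply Finset.card_bij (fun e _ => pa (tE e))
    · intro e he
      rw [Finset.mem_filter] at he
      obtain ⟨heM', hcrit⟩ := he
      have hre := hrep e heM'
      rw [← hre] at hcrit
      obtain ⟨A, -, -, -, -, hmax, -⟩ := crit_endpoints hcrit
      rw [Finset.mem_filter]
      refine ⟨(hpa (tE e) (htE e heM').2).1, fun hP => ?_⟩
      exact Finset.notMem_erase _ _ (hP _ hmax)
    · intro e1 he1 e2 he2 h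
      rw [Finset.mem_filter] at he1 he2
      have m1 : pa (tE e1) ∈ e1 := by
        have hre := hrep e1 he1.1
        generalize hgen : tE e1 = u at hre ⊢
        rw [← hre]
        simp
      have m2 : pa (tE e1) ∈ e2 := by
        have m2' : pa (tE e2) ∈ e2 := by
          have hre := hrep e2 he2.1
          generalize hgen : tE e2 = u at hre ⊢
          rw [← hre]
          simp
        rwa [← h] at m2'
      exact edge_unique e1 he1.1 e2 he2.1 _ m1 m2
    · intro x hx
      rw [Finset.mem_filter] at hx
      obtain ⟨hxS, hxnP⟩ := hx
      obtain ⟨T, hT, hxT⟩ : ∃ T : Finset V, IsMaxStable G T ∧ x ∉ T := by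
        by_contra hcon
        push_neg at hcon
        exact hxnP (fun T hT => hcon T hT)
      have hTcard : T.card = S.card := by rw [hT.2, hSc]
      obtain ⟨y, hyT, hyS, hyx⟩ := hpasurj T hT.1 hTcard x hxS hxT
      obtain ⟨A, hAst, hAcard⟩ := crit_of_forest hS.1 hT.1 hM hforest pa hpa painj
        (hpasurj T hT.1 hTcard) hyS hyT
      have hcrit : IsAlphaCritical G s(pa y, y) := by
        refine ⟨hedge _ (hpa y hyS).2, ?_⟩
        have hle := isStable_card_le_alpha hAst
        rw [hAcard, hSc] at hle
        omega
      refine ⟨s(pa y, y), Finset.mem_filter.2 ⟨(hpa y hyS).2, hcrit⟩, ?_⟩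
      have htee : tE s(pa y, y) = y := by
        have h1 := htE _ (hpa y hyS).2
        rcases Sym2.mem_iff.1 h1.1 with h | h
        · exact absurd (hpa y hyS).1 (h ▸ h1.2)
        · exact h
      rw [htee, hyx]
  -- bijection with non-S vertices in some maximum stable set
  have hbij2 : (M.filter fun e => IsAlphaCritical G e).card
      = (Sᶜ.filter Q).card := by
    apply Finset.card_bij (fun e _ => tE e)
    · intro e he
      rw [Finset.mem_filter] at he
      obtain ⟨heM', hcrit⟩ := he
      have hre := hrep e heM'
      rw [← hre] at hcrit
      obtain ⟨A, -, -, -, hvA, hmax, -⟩ := crit_endpoints hcrit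
      rw [Finset.mem_filter, Finset.mem_compl]
      refine ⟨(htE e heM').2, A.erase (pa (tE e)), hmax, ?_⟩
      rw [Finset.mem_erase]
      exact ⟨fun h => (htE e heM').2 (h.symm ▸ (hpa (tE e) (htE e heM').2).1), hvA⟩
    · intro e1 he1 e2 he2 h
      rw [Finset.mem_filter] at he1 he2
      exact edge_unique e1 he1.1 e2 he2.1 (tE e1) (htE e1 he1.1).1
        (h.symm ▸ (htE e2 he2.1).1)
    · intro v hv
      rw [Finset.mem_filter, Finset.mem_compl] at hv
      obtain ⟨hvS, T, hT, hvT⟩ := hv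
      have hTcard : T.card = S.card := by rw [hT.2, hSc]
      obtain ⟨A, hAst, hAcard⟩ := crit_of_forest hS.1 hT.1 hM hforest pa hpa painj
        (hpasurj T hT.1 hTcard) hvS hvT
      have hcrit : IsAlphaCritical G s(pa v, v) := by
        refine ⟨hedge _ (hpa v hvS).2, ?_⟩
        have hle := isStable_card_le_alpha hAst
        rw [hAcard, hSc] at hle
        omega
      refine ⟨s(pa v, v), Finset.mem_filter.2 ⟨(hpa v hvS).2, hcrit⟩, ?_⟩
      have h1 := htE _ (hpa v hvS).2
      rcases Sym2.mem_iff.1 h1.1 with h | h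
      · exact absurd (hpa v hvS).1 (h ▸ h1.2)
      · exact h
  have hcount1 : (S.filter P).card + (S.filter fun v => ¬ P v).card = S.card :=
    Finset.card_filter_add_card_filter_not P
  have hcount2 : (Sᶜ.filter Q).card + (Sᶜ.filter fun v => ¬ Q v).card = (Sᶜ : Finset V).card :=
    Finset.card_filter_add_card_filter_not Q
  refine ⟨by omega, by omega, by omega⟩

end KEG
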